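/- For subspaces U and W of R^n with projection matrices P_U and P_W and dim U = dim W, the quantities ‖(I − P_U)P_W‖ and ‖(I − P_W)P_U‖ are equal, and both equal the sine of the largest principal angle between U and W. -/

import Mathlib

open Matrix

/-- View a plain vector as an element of Euclidean space. -/
noncomputable def toEuc {n : ℕ} (v : Fin n → ℝ) : EuclideanSpace ℝ (Fin n) := WithLp.toLp 2 v

/-- The row space of a matrix, as a subspace of Euclidean space `ℝ^n`. -/
noncomputable def rowSpace {m : Type*} {n : ℕ} (A : Matrix m (Fin n) ℝ) :
    Submodule ℝ (EuclideanSpace ℝ (Fin n)) :=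
  Submodule.span ℝ (Set.range fun i => toEuc (A i))

/-- The orthogonal projection matrix onto a subspace of `ℝ^n`. -/
noncomputable def projMat {n : ℕ} (U : Submodule ℝ (EuclideanSpace ℝ (Fin n))) :
    Matrix (Fin n) (Fin n) ℝ :=
  Matrix.toEuclideanLin.symm (U.subtype ∘ₗ (U.orthogonalProjectionOnto).toLinearMap)

/-- The operator (spectral) norm of a matrix. -/
noncomputable def opNorm {m : Type*} [Fintype m] {n : ℕ} (A : Matrix m (Fin n) ℝ) : ℝ :=
  ‖(Matrix.toEuclideanLin A).toContinuousLinearMap‖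

theorem Matrix.isHermitian_transpose_mul_self {m : Type*} [Fintype m] {n : ℕ}
    (A : Matrix m (Fin n) ℝ) : (Aᵀ * A).IsHermitian := by
  rw [IsHermitian, conjTranspose_eq_transpose_of_trivial, transpose_mul, transpose_transpose]

/-- Singular values of a matrix, in ascending order. -/
noncomputable def svalAsc {m : Type*} [Fintype m] {n : ℕ} (A : Matrix m (Fin n) ℝ) :
    Fin n → ℝ := fun i =>
  Real.sqrt ((Matrix.isHermitian_transpose_mul_self A).eigenvalues
    (Tuple.sort (Matrix.isHermitian_transpose_mul_self A).eigenvalues i))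

/-- Singular values of a matrix, in descending order (`svalDesc A 0` is the largest). -/
noncomputable def svalDesc {m : Type*} [Fintype m] {n : ℕ} (A : Matrix m (Fin n) ℝ)
    (i : Fin n) : ℝ :=
  svalAsc A i.rev

section Aux

open scoped RealInnerProductSpace

/-- The continuous linear map on Euclidean spaces associated to a matrix. -/
noncomputable def clmOf {m n : ℕ} (A : Matrix (Fin m) (Fin n) ℝ) :
    EuclideanSpace ℝ (Fin n) →L[ℝ] EuclideanSpace ℝ (Fin m) :=
  (Matrix.toEuclideanLin A).toContinuousLinearMap

lemma opNorm_eq_norm_clmOf {m n : ℕ} (A : Matrix (Fin m) (Fin n) ℝ) :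
    opNorm A = ‖clmOf A‖ := rfl

lemma clmOf_mul {m k n : ℕ} (A : Matrix (Fin m) (Fin k) ℝ) (B : Matrix (Fin k) (Fin n) ℝ) :
    clmOf (A * B) = (clmOf A).comp (clmOf B) := by
  ext x
  show ((A * B) *ᵥ x) _ = (A *ᵥ (B *ᵥ x)) _
  rw [mulVec_mulVec]

lemma clmOf_one {n : ℕ} : clmOf (1 : Matrix (Fin n) (Fin n) ℝ) = ContinuousLinearMap.id ℝ _ := by
  ext x
  show ((1 : Matrix (Fin n) (Fin n) ℝ) *ᵥ x) _ = x _
  rw [one_mulVec]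

lemma clmOf_sub {m n : ℕ} (A B : Matrix (Fin m) (Fin n) ℝ) :
    clmOf (A - B) = clmOf A - clmOf B := by
  ext x
  show ((A - B) *ᵥ x) _ = (A *ᵥ x - B *ᵥ x) _
  rw [Matrix.sub_mulVec]

lemma clmOf_adjoint {m n : ℕ} (A : Matrix (Fin m) (Fin n) ℝ) :
    ContinuousLinearMap.adjoint (clmOf A) = clmOf Aᵀ := by
  symm
  rw [ContinuousLinearMap.eq_adjoint_iff]
  intro x y
  show ⟪(Matrix.toEuclideanLin Aᵀ) x, y⟫ = ⟪x, (Matrix.toEuclideanLin A) y⟫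
  rw [← Matrix.conjTranspose_eq_transpose_of_trivial,
    Matrix.toEuclideanLin_conjTranspose_eq_adjoint, LinearMap.adjoint_inner_left]

lemma norm_clmOf_apply_of_orth {n p : ℕ} {B : Matrix (Fin n) (Fin p) ℝ} (hB : Bᵀ * B = 1)
    (x : EuclideanSpace ℝ (Fin p)) : ‖clmOf B x‖ = ‖x‖ := by
  have h : ⟪clmOf B x, clmOf B x⟫ = ⟪x, x⟫ := by
    rw [← ContinuousLinearMap.adjoint_inner_left, clmOf_adjoint, ← ContinuousLinearMap.comp_apply,
      ← clmOf_mul, hB, clmOf_one, ContinuousLinearMap.id_apply]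
  have := congrArg Real.sqrt h
  rwa [real_inner_self_eq_norm_sq, real_inner_self_eq_norm_sq,
    Real.sqrt_sq (norm_nonneg _), Real.sqrt_sq (norm_nonneg _)] at this

lemma norm_clmOf_le_one_of_orth {n p : ℕ} {B : Matrix (Fin n) (Fin p) ℝ} (hB : Bᵀ * B = 1) :
    ‖clmOf B‖ ≤ 1 := by
  refine ContinuousLinearMap.opNorm_le_bound _ zero_le_one fun x => ?_
  rw [norm_clmOf_apply_of_orth hB, one_mul]

lemma norm_clmOf_transpose {m n : ℕ} (A : Matrix (Fin m) (Fin n) ℝ) :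
    ‖clmOf Aᵀ‖ = ‖clmOf A‖ := by
  rw [← clmOf_adjoint]
  exact LinearIsometryEquiv.norm_map (ContinuousLinearMap.adjoint) _

lemma norm_clmOf_conj {n p : ℕ} {B : Matrix (Fin n) (Fin p) ℝ} (hB : Bᵀ * B = 1)
    (X : Matrix (Fin p) (Fin p) ℝ) : ‖clmOf (B * X * Bᵀ)‖ = ‖clmOf X‖ := by
  have hBn : ‖clmOf B‖ ≤ 1 := norm_clmOf_le_one_of_orth hB
  have hBtn : ‖clmOf Bᵀ‖ ≤ 1 := by rw [norm_clmOf_transpose]; exact hBn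
  have le1 : ∀ Y : Matrix (Fin p) (Fin p) ℝ, ‖clmOf (B * Y * Bᵀ)‖ ≤ ‖clmOf Y‖ := by
    intro Y
    rw [clmOf_mul, clmOf_mul]
    calc ‖(clmOf B ∘L clmOf Y) ∘L clmOf Bᵀ‖ ≤ ‖clmOf B ∘L clmOf Y‖ * ‖clmOf Bᵀ‖ :=
          ContinuousLinearMap.opNorm_comp_le _ _
      _ ≤ ‖clmOf B‖ * ‖clmOf Y‖ * ‖clmOf Bᵀ‖ := by
          gcongr; exact ContinuousLinearMap.opNorm_comp_le _ _
      _ ≤ 1 * ‖clmOf Y‖ * 1 := by gcongr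
      _ = ‖clmOf Y‖ := by ring
  refine le_antisymm (le1 X) ?_
  have hX : X = Bᵀ * (B * X * Bᵀ) * B := by
    rw [show Bᵀ * (B * X * Bᵀ) * B = (Bᵀ * B) * X * (Bᵀ * B) by
      simp only [Matrix.mul_assoc], hB, Matrix.one_mul, Matrix.mul_one]
  calc ‖clmOf X‖ = ‖clmOf (Bᵀ * (B * X * Bᵀ) * B)‖ := by rw [← hX]
    _ ≤ ‖clmOf Bᵀ‖ * ‖clmOf (B * X * Bᵀ)‖ * ‖clmOf B‖ := by
        rw [clmOf_mul, clmOf_mul]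
        calc ‖(clmOf Bᵀ ∘L clmOf (B * X * Bᵀ)) ∘L clmOf B‖
            ≤ ‖clmOf Bᵀ ∘L clmOf (B * X * Bᵀ)‖ * ‖clmOf B‖ :=
              ContinuousLinearMap.opNorm_comp_le _ _
          _ ≤ ‖clmOf Bᵀ‖ * ‖clmOf (B * X * Bᵀ)‖ * ‖clmOf B‖ := by
              gcongr; exact ContinuousLinearMap.opNorm_comp_le _ _
    _ ≤ 1 * ‖clmOf (B * X * Bᵀ)‖ * 1 := by gcongr
    _ = ‖clmOf (B * X * Bᵀ)‖ := by ring

lemma euc_sum_apply {ι : Type*} [Fintype ι] {n : ℕ} (f : ι → EuclideanSpace ℝ (Fin n))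
    (i : Fin n) : (∑ j, f j) i = ∑ j, f j i :=
  map_sum ((LinearMap.proj i).comp (WithLp.linearEquiv 2 ℝ (Fin n → ℝ)).toLinearMap) f Finset.univ

section Eigen
variable {p : ℕ} (M : Matrix (Fin p) (Fin p) ℝ)
  (v : OrthonormalBasis (Fin p) ℝ (EuclideanSpace ℝ (Fin p))) (μ : Fin p → ℝ)

lemma repr_clm_eigen (hv : ∀ i, clmOf M (v i) = μ i • v i)
    (x : EuclideanSpace ℝ (Fin p)) (i : Fin p) :
    v.repr (clmOf M x) i = μ i * v.repr x i := by
  have hx : clmOf M x = ∑ j, (v.repr x j * μ j) • v j := by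
    conv_lhs => rw [← v.sum_repr x]
    rw [map_sum]
    congr 1; ext j
    rw [_root_.map_smul, hv j, smul_smul]
  rw [hx, map_sum]
  have h2 : ∀ j, (v.repr ((v.repr x j * μ j) • v j)) i
      = (v.repr x j * μ j) * (EuclideanSpace.single j (1:ℝ)) i := by
    intro j
    rw [_root_.map_smul, v.repr_self]
    rfl
  rw [euc_sum_apply]
  simp_rw [h2, EuclideanSpace.single_apply]
  rw [Finset.sum_congr rfl (fun j _ => by rw [mul_ite, mul_one, mul_zero] :
    ∀ j ∈ Finset.univ, (v.repr x j * μ j * if i = j then (1:ℝ) else 0)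
      = if i = j then v.repr x j * μ j else 0),
    Finset.sum_ite_eq Finset.univ i fun j => v.repr x j * μ j]
  simp [mul_comm]

lemma inner_self_repr (x : EuclideanSpace ℝ (Fin p)) :
    ⟪x, x⟫ = ∑ i, v.repr x i * v.repr x i := by
  rw [← LinearIsometryEquiv.inner_map_map v.repr x x, PiLp.inner_apply]
  simp [RCLike.inner_apply]
  exact Finset.sum_congr rfl fun i _ => sq _

lemma inner_clm_eigen (hv : ∀ i, clmOf M (v i) = μ i • v i) (x : EuclideanSpace ℝ (Fin p)) :
    ⟪x, clmOf M x⟫ = ∑ i, μ i * (v.repr x i)^2 := by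
  rw [← LinearIsometryEquiv.inner_map_map v.repr x (clmOf M x), PiLp.inner_apply]
  simp only [RCLike.inner_apply, conj_trivial]
  congr 1; ext i
  rw [repr_clm_eigen M v μ hv x i]
  ring

lemma norm_clm_eigen (hv : ∀ i, clmOf M (v i) = μ i • v i) (c : ℝ)
    (hc : ∀ i, |μ i| ≤ c) (i0 : Fin p) (hi0 : |μ i0| = c) :
    ‖clmOf M‖ = c := by
  have hc0 : 0 ≤ c := hi0 ▸ abs_nonneg _
  refine le_antisymm ?_ ?_
  · refine ContinuousLinearMap.opNorm_le_bound _ hc0 fun x => ?_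
    have h1 : ‖clmOf M x‖ = ‖v.repr (clmOf M x)‖ := (LinearIsometryEquiv.norm_map _ _).symm
    have h2 : ‖x‖ = ‖v.repr x‖ := (LinearIsometryEquiv.norm_map _ _).symm
    rw [h1, h2, EuclideanSpace.norm_eq, EuclideanSpace.norm_eq]
    rw [show c * Real.sqrt (∑ i, ‖v.repr x i‖^2) = Real.sqrt (c^2 * ∑ i, ‖v.repr x i‖^2) by
      rw [Real.sqrt_mul (by positivity), Real.sqrt_sq hc0]]
    apply Real.sqrt_le_sqrt
    rw [Finset.mul_sum]
    refine Finset.sum_le_sum fun i _ => ?_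
    rw [repr_clm_eigen M v μ hv x i]
    have := hc i
    rw [Real.norm_eq_abs, Real.norm_eq_abs, abs_mul]
    calc (|μ i| * |v.repr x i|)^2 ≤ (c * |v.repr x i|)^2 := by
          apply pow_le_pow_left₀ (by positivity)
          exact mul_le_mul_of_nonneg_right this (abs_nonneg _)
      _ = c^2 * |v.repr x i|^2 := by ring
  · have h1 : ‖clmOf M (v i0)‖ = c := by
      rw [hv i0, norm_smul, v.orthonormal.1 i0, Real.norm_eq_abs, mul_one, hi0]
    calc c = ‖clmOf M (v i0)‖ := h1.symm
      _ ≤ ‖clmOf M‖ * ‖v i0‖ := ContinuousLinearMap.le_opNorm _ _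
      _ = ‖clmOf M‖ := by rw [v.orthonormal.1 i0, mul_one]

end Eigen

lemma inner_gram {n p : ℕ} (A : Matrix (Fin n) (Fin p) ℝ) (x : EuclideanSpace ℝ (Fin p)) :
    ⟪x, clmOf (Aᵀ * A) x⟫ = ‖clmOf A x‖^2 := by
  rw [clmOf_mul, ContinuousLinearMap.comp_apply, ← clmOf_adjoint,
    ContinuousLinearMap.adjoint_inner_right, real_inner_self_eq_norm_sq]

lemma transfer_lower_bound {p : ℕ} (S : Matrix (Fin p) (Fin p) ℝ) (m : ℝ) (hm : 0 ≤ m)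
    (h : ∀ x, m * ‖x‖^2 ≤ ‖clmOf S x‖^2) (y : EuclideanSpace ℝ (Fin p)) :
    m * ‖y‖^2 ≤ ‖clmOf Sᵀ y‖^2 := by
  rcases eq_or_lt_of_le hm with hm0 | hmpos
  · rw [← hm0, zero_mul]; positivity
  have hinj : Function.Injective (clmOf S) := by
    intro a b hab
    have h0 : clmOf S (a - b) = 0 := by rw [map_sub, hab, sub_self]
    have h2 := h (a - b)
    rw [h0, norm_zero] at h2
    have h3 : ‖a - b‖^2 ≤ 0 := by nlinarith
    have h4 : ‖a - b‖ = 0 := by nlinarith [norm_nonneg (a - b), sq_nonneg (‖a-b‖)]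
    rwa [norm_sub_eq_zero_iff] at h4
  have hsurj : Function.Surjective (clmOf S) :=
    (LinearMap.injective_iff_surjective (f := (clmOf S).toLinearMap)).mp hinj
  obtain ⟨x, hx⟩ := hsurj y
  rcases eq_or_ne y 0 with rfl | hy
  · simp
  have hyn : 0 < ‖y‖ := norm_pos_iff.mpr hy
  have hsm : Real.sqrt m > 0 := Real.sqrt_pos.mpr hmpos
  have h1 : Real.sqrt m * ‖x‖ ≤ ‖y‖ := by
    have hh := h x
    rw [hx] at hh
    have h2 : Real.sqrt (m * ‖x‖^2) ≤ Real.sqrt (‖y‖^2) := Real.sqrt_le_sqrt hh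
    rwa [Real.sqrt_mul hm, Real.sqrt_sq (norm_nonneg _), Real.sqrt_sq (norm_nonneg _)] at h2
  have h2 : ‖y‖^2 ≤ ‖clmOf Sᵀ y‖ * ‖x‖ := by
    have hiy : ⟪y, y⟫ = ⟪clmOf Sᵀ y, x⟫ := by
      rw [← clmOf_adjoint, ContinuousLinearMap.adjoint_inner_left, hx]
    calc ‖y‖^2 = ⟪y, y⟫ := (real_inner_self_eq_norm_sq y).symm
      _ = ⟪clmOf Sᵀ y, x⟫ := hiy
      _ ≤ ‖clmOf Sᵀ y‖ * ‖x‖ := real_inner_le_norm _ _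
  have h3 : Real.sqrt m * ‖y‖^2 ≤ ‖clmOf Sᵀ y‖ * ‖y‖ := by
    calc Real.sqrt m * ‖y‖^2 ≤ Real.sqrt m * (‖clmOf Sᵀ y‖ * ‖x‖) :=
          mul_le_mul_of_nonneg_left h2 (le_of_lt hsm)
      _ = ‖clmOf Sᵀ y‖ * (Real.sqrt m * ‖x‖) := by ring
      _ ≤ ‖clmOf Sᵀ y‖ * ‖y‖ := mul_le_mul_of_nonneg_left h1 (norm_nonneg _)
  have h4 : Real.sqrt m * ‖y‖ ≤ ‖clmOf Sᵀ y‖ := by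
    refine le_of_mul_le_mul_right ?_ hyn
    calc Real.sqrt m * ‖y‖ * ‖y‖ = Real.sqrt m * ‖y‖^2 := by ring
      _ ≤ ‖clmOf Sᵀ y‖ * ‖y‖ := h3
  have h5 := mul_self_le_mul_self (by positivity) h4
  nlinarith [Real.sq_sqrt hm]

lemma mulVec_mem_rowSpace {n p : ℕ} (B : Matrix (Fin n) (Fin p) ℝ) (c : Fin p → ℝ) :
    toEuc (B *ᵥ c) ∈ rowSpace Bᵀ := by
  have h : toEuc (B *ᵥ c) = ∑ i, c i • toEuc (Bᵀ i) := by
    ext j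
    rw [euc_sum_apply]
    show ∑ i, B j i * c i = ∑ i, c i * B j i
    exact Finset.sum_congr rfl fun i _ => mul_comm _ _
  rw [h]
  exact Submodule.sum_mem _ fun i _ =>
    Submodule.smul_mem _ _ (Submodule.subset_span ⟨i, rfl⟩)

lemma projMat_eq {n p : ℕ} (B : Matrix (Fin n) (Fin p) ℝ) (hB : Bᵀ * B = 1)
    (U : Submodule ℝ (EuclideanSpace ℝ (Fin n))) (hU : rowSpace Bᵀ = U) :
    projMat U = B * Bᵀ := by
  rw [projMat, LinearEquiv.symm_apply_eq]
  refine LinearMap.ext fun x => ?_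
  show U.starProjection x = Matrix.toEuclideanLin (B * Bᵀ) x
  have hz : Matrix.toEuclideanLin (B * Bᵀ) x = toEuc (B *ᵥ (Bᵀ *ᵥ x)) := by
    show toEuc ((B * Bᵀ) *ᵥ x) = toEuc (B *ᵥ (Bᵀ *ᵥ x))
    rw [← mulVec_mulVec]
  rw [hz]
  refine Submodule.eq_starProjection_of_mem_of_inner_eq_zero ?_ ?_
  · rw [← hU]; exact mulVec_mem_rowSpace B _
  · intro w hw
    rw [← hU] at hw
    have key : ∀ i : Fin p, ⟪x - toEuc (B *ᵥ (Bᵀ *ᵥ x)), toEuc (Bᵀ i)⟫ = 0 := by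
      intro i
      have h1 : ⟪x - toEuc (B *ᵥ (Bᵀ *ᵥ x)), toEuc (Bᵀ i)⟫
          = (Bᵀ *ᵥ x) i - (Bᵀ *ᵥ (B *ᵥ (Bᵀ *ᵥ x))) i := by
        rw [PiLp.inner_apply]
        simp only [RCLike.inner_apply, conj_trivial]
        have hterm : ∀ j, (toEuc (Bᵀ i)) j * (x - toEuc (B *ᵥ (Bᵀ *ᵥ x))) j
            = B j i * x j - B j i * (B *ᵥ (Bᵀ *ᵥ x)) j := by
          intro j
          show B j i * (x j - (B *ᵥ (Bᵀ *ᵥ x)) j) = _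
          ring
        rw [Finset.sum_congr rfl fun j _ => hterm j, Finset.sum_sub_distrib]
        rfl
      rw [h1, mulVec_mulVec, hB, one_mulVec, sub_self]
    refine Submodule.span_induction (fun w hw => ?_) (by simp) (fun a b _ _ ha hb => ?_)
      (fun r a _ ha => ?_) hw
    · obtain ⟨i, rfl⟩ := hw
      exact key i
    · rw [inner_add_right, ha, hb, add_zero]
    · rw [inner_smul_right, ha, mul_zero]

lemma gram_eq {n p : ℕ} (BU BW : Matrix (Fin n) (Fin p) ℝ)
    (hBU1 : BUᵀ * BU = 1) (hBW1 : BWᵀ * BW = 1) :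
    ((1 - BU * BUᵀ) * (BW * BWᵀ))ᵀ * ((1 - BU * BUᵀ) * (BW * BWᵀ))
      = BW * (1 - (BUᵀ * BW)ᵀ * (BUᵀ * BW)) * BWᵀ := by
  have hBU' : ∀ {m : Type} (X : Matrix (Fin p) m ℝ), BUᵀ * (BU * X) = X := fun X => by
    rw [← Matrix.mul_assoc, hBU1, Matrix.one_mul]
  have hBW' : ∀ {m : Type} (X : Matrix (Fin p) m ℝ), BWᵀ * (BW * X) = X := fun X => by
    rw [← Matrix.mul_assoc, hBW1, Matrix.one_mul]
  simp only [Matrix.transpose_mul, Matrix.transpose_sub, Matrix.transpose_one,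
    Matrix.transpose_transpose, Matrix.mul_sub, Matrix.sub_mul, Matrix.mul_one, Matrix.one_mul,
    Matrix.mul_assoc, hBU', hBW']
  abel

/-- The minimal entry property of the sorted tuple at index 0. -/
lemma sort_zero_le {p : ℕ} (hp : 0 < p) (f : Fin p → ℝ) (i : Fin p) :
    f (Tuple.sort f ⟨0, hp⟩) ≤ f i := by
  have h := Tuple.monotone_sort f
    (show (⟨0, hp⟩ : Fin p) ≤ (Tuple.sort f).symm i by simp [Fin.le_def])
  simpa using h

section Final

variable {p : ℕ}

/-- The eigen-equation for `Tᵀ * T` as continuous linear maps. -/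
lemma clm_eigen_gram (T : Matrix (Fin p) (Fin p) ℝ) (i : Fin p) :
    clmOf (Tᵀ * T) ((Matrix.isHermitian_transpose_mul_self T).eigenvectorBasis i)
      = (Matrix.isHermitian_transpose_mul_self T).eigenvalues i •
        (Matrix.isHermitian_transpose_mul_self T).eigenvectorBasis i := by
  have h := (Matrix.isHermitian_transpose_mul_self T).mulVec_eigenvectorBasis i
  exact congrArg (WithLp.toLp 2) h

lemma eig_eq_normsq (T : Matrix (Fin p) (Fin p) ℝ) (i : Fin p) :
    (Matrix.isHermitian_transpose_mul_self T).eigenvalues i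
      = ‖clmOf T ((Matrix.isHermitian_transpose_mul_self T).eigenvectorBasis i)‖^2 := by
  set hT := Matrix.isHermitian_transpose_mul_self T
  have h := inner_gram T (hT.eigenvectorBasis i)
  rw [clm_eigen_gram T i, real_inner_smul_right, real_inner_self_eq_norm_sq,
    hT.eigenvectorBasis.orthonormal.1 i] at h
  simpa using h

lemma lb_of_min (T : Matrix (Fin p) (Fin p) ℝ) (m : ℝ)
    (hm : ∀ i, m ≤ (Matrix.isHermitian_transpose_mul_self T).eigenvalues i)
    (x : EuclideanSpace ℝ (Fin p)) : m * ‖x‖^2 ≤ ‖clmOf T x‖^2 := by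
  set hT := Matrix.isHermitian_transpose_mul_self T
  set v := hT.eigenvectorBasis
  have hgram := inner_gram T x
  have hexp := inner_clm_eigen (Tᵀ * T) v hT.eigenvalues (clm_eigen_gram T) x
  have hx : ‖x‖^2 = ∑ i, (v.repr x i)^2 := by
    rw [← real_inner_self_eq_norm_sq, inner_self_repr v x]
    exact Finset.sum_congr rfl fun i _ => (sq (v.repr x i)).symm
  rw [← hgram, hexp, hx, Finset.mul_sum]
  exact Finset.sum_le_sum fun i _ =>
    mul_le_mul_of_nonneg_right (hm i) (sq_nonneg _)

end Final

end Aux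

/-- for equal-dimensional subspaces `U`, `W` of `ℝ^n`,
`‖(I − P_U) P_W‖ = ‖(I − P_W) P_U‖`, and both equal the sine of the largest principal
angle between `U` and `W` (whose cosine is the smallest singular value of `BUᵀ * BW`). -/
theorem opNorm_one_sub_proj_mul_proj_comm_eq_sin (n p : ℕ) (hp : 0 < p)
    (U W : Submodule ℝ (EuclideanSpace ℝ (Fin n)))
    (BU BW : Matrix (Fin n) (Fin p) ℝ)
    (hBU1 : BUᵀ * BU = 1) (hBU2 : rowSpace BUᵀ = U)
    (hBW1 : BWᵀ * BW = 1) (hBW2 : rowSpace BWᵀ = W)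
    (hdim : Module.finrank ℝ U = Module.finrank ℝ W) :
    opNorm ((1 - projMat U) * projMat W) = opNorm ((1 - projMat W) * projMat U) ∧
    opNorm ((1 - projMat U) * projMat W)
      = Real.sin (Real.arccos (svalAsc (BUᵀ * BW) ⟨0, hp⟩)) := by
  classical
  set S : Matrix (Fin p) (Fin p) ℝ := BUᵀ * BW with hSdef
  set S2 : Matrix (Fin p) (Fin p) ℝ := BWᵀ * BU with hS2def
  have hS2T : S2 = Sᵀ := by rw [hSdef, hS2def, Matrix.transpose_mul, Matrix.transpose_transpose]
  set hS := Matrix.isHermitian_transpose_mul_self S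
  set hS2 := Matrix.isHermitian_transpose_mul_self S2
  let j0 : Fin p := Tuple.sort hS.eigenvalues ⟨0, hp⟩
  let j2 : Fin p := Tuple.sort hS2.eigenvalues ⟨0, hp⟩
  let m1 : ℝ := hS.eigenvalues j0
  let m2 : ℝ := hS2.eigenvalues j2
  have hmin1 : ∀ i, m1 ≤ hS.eigenvalues i := sort_zero_le hp hS.eigenvalues
  have hmin2 : ∀ i, m2 ≤ hS2.eigenvalues i := sort_zero_le hp hS2.eigenvalues
  have hm1nn : 0 ≤ m1 := Matrix.eigenvalues_conjTranspose_mul_self_nonneg S j0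
  have hm2nn : 0 ≤ m2 := Matrix.eigenvalues_conjTranspose_mul_self_nonneg S2 j2
  -- m1 = m2
  have hlb1 : ∀ x, m1 * ‖x‖^2 ≤ ‖clmOf S x‖^2 := lb_of_min S m1 hmin1
  have hlb2 : ∀ x, m2 * ‖x‖^2 ≤ ‖clmOf S2 x‖^2 := lb_of_min S2 m2 hmin2
  have hm12 : m1 = m2 := by
    refine le_antisymm ?_ ?_
    · have ht := transfer_lower_bound S m1 hm1nn hlb1
      have := ht (hS2.eigenvectorBasis j2)
      rw [← hS2T] at this
      show m1 ≤ hS2.eigenvalues j2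
      rw [eig_eq_normsq S2 j2]
      calc m1 = m1 * ‖hS2.eigenvectorBasis j2‖^2 := by
            rw [hS2.eigenvectorBasis.orthonormal.1 j2]; ring
        _ ≤ _ := this
    · have ht := transfer_lower_bound S2 m2 hm2nn hlb2
      have := ht (hS.eigenvectorBasis j0)
      rw [hS2T, Matrix.transpose_transpose] at this
      show m2 ≤ hS.eigenvalues j0
      rw [eig_eq_normsq S j0]
      calc m2 = m2 * ‖hS.eigenvectorBasis j0‖^2 := by
            rw [hS.eigenvectorBasis.orthonormal.1 j0]; ring
        _ ≤ _ := this
  -- eigenvalues are at most 1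
  have hSnorm : ‖clmOf S‖ ≤ 1 := by
    rw [hSdef, clmOf_mul]
    calc ‖clmOf BUᵀ ∘L clmOf BW‖ ≤ ‖clmOf BUᵀ‖ * ‖clmOf BW‖ :=
          ContinuousLinearMap.opNorm_comp_le _ _
      _ ≤ 1 * 1 := by
          gcongr
          · rw [norm_clmOf_transpose]; exact norm_clmOf_le_one_of_orth hBU1
          · exact norm_clmOf_le_one_of_orth hBW1
      _ = 1 := by ring
  have hS2norm : ‖clmOf S2‖ ≤ 1 := by
    rw [hS2T, norm_clmOf_transpose]; exact hSnorm
  have hle1 : ∀ i, hS.eigenvalues i ≤ 1 := by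
    intro i
    rw [eig_eq_normsq S i]
    have h := ContinuousLinearMap.le_opNorm (clmOf S) (hS.eigenvectorBasis i)
    rw [hS.eigenvectorBasis.orthonormal.1 i, mul_one] at h
    nlinarith [norm_nonneg (clmOf S (hS.eigenvectorBasis i))]
  have hle2 : ∀ i, hS2.eigenvalues i ≤ 1 := by
    intro i
    rw [eig_eq_normsq S2 i]
    have h := ContinuousLinearMap.le_opNorm (clmOf S2) (hS2.eigenvectorBasis i)
    rw [hS2.eigenvectorBasis.orthonormal.1 i, mul_one] at h
    nlinarith [norm_nonneg (clmOf S2 (hS2.eigenvectorBasis i))]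
  have hm1le1 : m1 ≤ 1 := hle1 j0
  have hm2le1 : m2 ≤ 1 := hle2 j2
  -- norm of 1 - SᵀS
  have hnorm1 : ‖clmOf (1 - Sᵀ * S)‖ = 1 - m1 := by
    refine norm_clm_eigen (1 - Sᵀ * S) hS.eigenvectorBasis (fun i => 1 - hS.eigenvalues i) ?_ (1 - m1)
      ?_ j0 ?_
    · intro i
      rw [clmOf_sub, ContinuousLinearMap.sub_apply, clmOf_one, ContinuousLinearMap.id_apply,
        clm_eigen_gram S i, sub_smul, one_smul]
    · intro i
      show |1 - hS.eigenvalues i| ≤ 1 - m1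
      rw [abs_le]
      constructor
      · linarith [hle1 i]
      · linarith [hmin1 i]
    · show |1 - hS.eigenvalues j0| = 1 - m1
      rw [abs_of_nonneg (by linarith [hle1 j0])]
  have hnorm2 : ‖clmOf (1 - S2ᵀ * S2)‖ = 1 - m2 := by
    refine norm_clm_eigen (1 - S2ᵀ * S2) hS2.eigenvectorBasis (fun i => 1 - hS2.eigenvalues i) ?_ (1 - m2)
      ?_ j2 ?_
    · intro i
      rw [clmOf_sub, ContinuousLinearMap.sub_apply, clmOf_one, ContinuousLinearMap.id_apply,
        clm_eigen_gram S2 i, sub_smul, one_smul]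
    · intro i
      show |1 - hS2.eigenvalues i| ≤ 1 - m2
      rw [abs_le]
      constructor
      · linarith [hle2 i]
      · linarith [hmin2 i]
    · show |1 - hS2.eigenvalues j2| = 1 - m2
      rw [abs_of_nonneg (by linarith [hle2 j2])]
  -- the two operator norms
  have hPU : projMat U = BU * BUᵀ := projMat_eq BU hBU1 U hBU2
  have hPW : projMat W = BW * BWᵀ := projMat_eq BW hBW1 W hBW2
  have hsq1 : ‖clmOf ((1 - BU * BUᵀ) * (BW * BWᵀ))‖ * ‖clmOf ((1 - BU * BUᵀ) * (BW * BWᵀ))‖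
      = 1 - m1 := by
    set M := (1 - BU * BUᵀ) * (BW * BWᵀ) with hM
    have h1 : ‖clmOf (Mᵀ * M)‖ = ‖clmOf M‖ * ‖clmOf M‖ := by
      rw [clmOf_mul, ← clmOf_adjoint]
      exact ContinuousLinearMap.norm_adjoint_comp_self _
    have h2 : Mᵀ * M = BW * (1 - Sᵀ * S) * BWᵀ := by
      rw [hM, gram_eq BU BW hBU1 hBW1, hSdef]
    rw [← h1, h2, norm_clmOf_conj hBW1, hnorm1]
  have hsq2 : ‖clmOf ((1 - BW * BWᵀ) * (BU * BUᵀ))‖ * ‖clmOf ((1 - BW * BWᵀ) * (BU * BUᵀ))‖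
      = 1 - m2 := by
    set M := (1 - BW * BWᵀ) * (BU * BUᵀ) with hM
    have h1 : ‖clmOf (Mᵀ * M)‖ = ‖clmOf M‖ * ‖clmOf M‖ := by
      rw [clmOf_mul, ← clmOf_adjoint]
      exact ContinuousLinearMap.norm_adjoint_comp_self _
    have h2 : Mᵀ * M = BU * (1 - S2ᵀ * S2) * BUᵀ := by
      rw [hM, gram_eq BW BU hBW1 hBU1, hS2def]
    rw [← h1, h2, norm_clmOf_conj hBU1, hnorm2]
  have hv1 : opNorm ((1 - projMat U) * projMat W) = Real.sqrt (1 - m1) := by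
    rw [hPU, hPW, opNorm_eq_norm_clmOf]
    rw [← hsq1, Real.sqrt_mul_self (norm_nonneg _)]
  have hv2 : opNorm ((1 - projMat W) * projMat U) = Real.sqrt (1 - m2) := by
    rw [hPW, hPU, opNorm_eq_norm_clmOf]
    rw [← hsq2, Real.sqrt_mul_self (norm_nonneg _)]
  constructor
  · rw [hv1, hv2, hm12]
  · rw [hv1, Real.sin_arccos]
    have hs : svalAsc (BUᵀ * BW) ⟨0, hp⟩ = Real.sqrt m1 := rfl
    rw [hs, Real.sq_sqrt hm1nn]
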